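/- arXiv:1509.03364 — 2 statements merged into one kernel-verified Lean document; each statement's English description precedes it below -/
import Mathlib

section
/- In the rank-9 lattice ℤL ⊕ 𝕃 (𝕃 the Nikulin lattice, L² = 14, H = L − M), there is no class D with D² = 0 and D·H = 3, and no class D with D² = 2 and D·H = 5. -/
/-- In the rank-9 lattice `ℤL ⊕ 𝕃` (`𝕃` the Nikulin lattice, `L² = 14`, `H = L - M`),
there is no class `D` with `D² = 0, D·H = 3`, and none with `D² = 2, D·H = 5`. -/
theorem nikulin_genus8_no_low_clifford (Λ : Type*) [AddCommGroup Λ]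
    (B : Λ →ₗ[ℤ] Λ →ₗ[ℤ] ℤ)
    (hsymm : ∀ x y, B x y = B y x)
    (L : Λ) (N : Fin 8 → Λ) (M H : Λ)
    (hL : B L L = 14)
    (hLN : ∀ i, B L (N i) = 0)
    (hLM : B L M = 0)
    (hN : ∀ i j, B (N i) (N j) = if i = j then -2 else 0)
    (hM : 2 • M = ∑ i, N i)
    (hH : H = L - M)
    (hspan : ∀ D : Λ, ∃ (a b : ℤ) (c : Fin 8 → ℤ),
      D = a • L + b • M + ∑ i, c i • N i) :
    (¬ ∃ D : Λ, B D D = 0 ∧ B D H = 3) ∧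
      (¬ ∃ D : Λ, B D D = 2 ∧ B D H = 5) := by
  have hNL : ∀ i, B (N i) L = 0 := fun i => by rw [hsymm]; exact hLN i
  have hML : B M L = 0 := by rw [hsymm]; exact hLM
  have hMN : ∀ j, B M (N j) = -1 := by
    intro j
    have h1 : B (2 • M) (N j) = -2 := by
      rw [hM, map_sum, LinearMap.sum_apply]
      simp [hN]
    have h2 : B (2 • M) (N j) = 2 * B M (N j) := by
      rw [two_smul, map_add, LinearMap.add_apply]; ring
    omega
  have hNM : ∀ i, B (N i) M = -1 := fun i => by rw [hsymm]; exact hMN i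
  have hMM : B M M = -4 := by
    have h1 : B M (2 • M) = 2 * B M M := by
      rw [two_smul, map_add]; ring
    have h2 : B M (2 • M) = -8 := by
      rw [hM, map_sum]
      simp [hMN]
    omega
  have key : ∀ D : Λ, ∃ (a : ℤ) (d : Fin 8 → ℤ),
      (∑ i, d i) = 2 * (B D H - 14 * a) ∧
      (∑ i, d i ^ 2) = 2 * (14 * a ^ 2 - B D D) := by
    intro D
    obtain ⟨a, b, c, hD⟩ := hspan D
    have e1 : ∀ x, B x D = a * B x L + b * B x M + ∑ j, c j * B x (N j) := by
      intro x
      rw [hD]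
      simp [map_add, map_smul, map_sum, smul_eq_mul]
    have hDL : B D L = 14 * a := by
      rw [hsymm, e1, hL, hLM]
      have : ∀ j, c j * B L (N j) = 0 := fun j => by rw [hLN]; ring
      simp [this]; ring
    have hDM : B D M = -4 * b - ∑ i, c i := by
      rw [hsymm, e1, hML, hMM]
      have : ∀ j, c j * B M (N j) = -c j := fun j => by rw [hMN]; ring
      simp only [this, Finset.sum_neg_distrib]
      ring
    have hDN : ∀ j, B D (N j) = -b - 2 * c j := by
      intro j
      rw [hsymm, e1, hNL, hNM]
      have : ∀ i, c i * B (N j) (N i) = if i = j then -2 * c i else 0 := by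
        intro i
        rw [hN]
        rcases eq_or_ne i j with h | h
        · subst h; simp; ring
        · simp [h, h.symm]
      simp only [this, Finset.sum_ite_eq', Finset.mem_univ, if_true]
      ring
    have hDD : B D D = 14 * a ^ 2 - 4 * b ^ 2 - 2 * b * (∑ i, c i)
        - 2 * ∑ i, (c i) ^ 2 := by
      rw [e1 D, hDL, hDM]
      have : ∀ j, c j * B D (N j) = -(b * c j) - 2 * (c j)^2 := by
        intro j; rw [hDN]; ring
      simp only [this, Finset.sum_sub_distrib, Finset.sum_neg_distrib,
        ← Finset.mul_sum]
      ring
    have hDH : B D H = 14 * a + 4 * b + ∑ i, c i := by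
      rw [hH, map_sub, hDL, hDM]; ring
    refine ⟨a, fun i => b + 2 * c i, ?_, ?_⟩
    · rw [hDH]
      simp [Finset.sum_add_distrib, ← Finset.mul_sum]
      ring
    · rw [hDD]
      have : ∀ i, (b + 2 * c i)^2 = b^2 + 4 * (b * c i) + 4 * (c i)^2 := by
        intro i; ring
      simp only [this, Finset.sum_add_distrib, ← Finset.mul_sum,
        Finset.sum_const, Finset.card_univ, Fintype.card_fin, nsmul_eq_mul]
      push_cast
      ring
  have hint : ∀ a : ℤ, 0 ≤ a * (a - 1) := by
    intro a
    rcases le_or_gt a 0 with h | h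
    · nlinarith
    · nlinarith
  constructor
  · rintro ⟨D, hDD, hDH⟩
    obtain ⟨a, d, h1, h2⟩ := key D
    rw [hDH] at h1; rw [hDD] at h2
    have cs := sq_sum_le_card_mul_sum_sq (s := Finset.univ) (f := d)
    rw [h1, h2] at cs
    simp [Finset.card_univ] at cs
    nlinarith [hint a, hint (-a), sq_nonneg a]
  · rintro ⟨D, hDD, hDH⟩
    obtain ⟨a, d, h1, h2⟩ := key D
    rw [hDH] at h1; rw [hDD] at h2
    have cs := sq_sum_le_card_mul_sum_sq (s := Finset.univ) (f := d)
    rw [h1, h2] at cs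
    simp [Finset.card_univ] at cs
    nlinarith [hint a, hint (-a), sq_nonneg a]
end

section
/- In the rank-9 lattice ℤL ⊕ 𝕃 with L² = 14 and H = L − M, there is no class D with D² = 0 and D·H = 4. -/
lemma cs8 (c : Fin 8 → ℤ) : (∑ i, c i)^2 ≤ 8 * ∑ i, (c i)^2 := by
  simp only [Fin.sum_univ_eight]
  have key : 8 * (c 0^2 + c 1^2 + c 2^2 + c 3^2 + c 4^2 + c 5^2 + c 6^2 + c 7^2)
      - (c 0 + c 1 + c 2 + c 3 + c 4 + c 5 + c 6 + c 7)^2 = (c 0 - c 1)^2 + (c 0 - c 2)^2 + (c 0 - c 3)^2 + (c 0 - c 4)^2 + (c 0 - c 5)^2 + (c 0 - c 6)^2 + (c 0 - c 7)^2 + (c 1 - c 2)^2 + (c 1 - c 3)^2 + (c 1 - c 4)^2 + (c 1 - c 5)^2 + (c 1 - c 6)^2 + (c 1 - c 7)^2 + (c 2 - c 3)^2 + (c 2 - c 4)^2 + (c 2 - c 5)^2 + (c 2 - c 6)^2 + (c 2 - c 7)^2 + (c 3 - c 4)^2 + (c 3 - c 5)^2 + (c 3 - c 6)^2 + (c 3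 - c 7)^2 + (c 4 - c 5)^2 + (c 4 - c 6)^2 + (c 4 - c 7)^2 + (c 5 - c 6)^2 + (c 5 - c 7)^2 + (c 6 - c 7)^2 := by
    ring
  linarith [key, sq_nonneg (c 0 - c 1), sq_nonneg (c 0 - c 2), sq_nonneg (c 0 - c 3), sq_nonneg (c 0 - c 4), sq_nonneg (c 0 - c 5), sq_nonneg (c 0 - c 6), sq_nonneg (c 0 - c 7), sq_nonneg (c 1 - c 2), sq_nonneg (c 1 - c 3), sq_nonneg (c 1 - c 4), sq_nonneg (c 1 - c 5), sq_nonneg (c 1 - c 6), sq_nonneg (c 1 - c 7), sq_nonneg (c 2 - c 3), sq_nonneg (c 2 - c 4), sq_nonneg (c 2 - c 5), sq_nonneg (c 2 - c 6), sq_nonneg (c 2 - c 7), sq_nonneg (c 3 - c 4), sq_nonneg (c 3 - c 5), sq_nonneg (c 3 - c 6), sq_nonneg (c 3 - c 7), sq_nonneg (c 4 - c 5), sq_nonneg (c 4 - c 6), sq_nonneg (c 4 - c 7), sq_nonneg (c 5 - c 6), sq_nonneg (c 5 - c 7), sq_nonneg (c 6 - c 7)]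

/-- In the rank-9 lattice `ℤL ⊕ 𝕃` with `L² = 14` and `H = L - M`,
there is no class `D` with `D² = 0` and `D·H = 4`. -/
theorem nikulin_genus8_no_D04 (Λ : Type*) [AddCommGroup Λ]
    (B : Λ →ₗ[ℤ] Λ →ₗ[ℤ] ℤ)
    (hsymm : ∀ x y, B x y = B y x)
    (L : Λ) (N : Fin 8 → Λ) (M H : Λ)
    (hL : B L L = 14)
    (hLN : ∀ i, B L (N i) = 0)
    (hLM : B L M = 0)
    (hN : ∀ i j, B (N i) (N j) = if i = j then -2 else 0)
    (hM : 2 • M = ∑ i, N i)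
    (hH : H = L - M)
    (hspan : ∀ D : Λ, ∃ (a b : ℤ) (c : Fin 8 → ℤ),
      D = a • L + b • M + ∑ i, c i • N i) :
    ¬ ∃ D : Λ, B D D = 0 ∧ B D H = 4 := by
  rintro ⟨D, hDD, hDH⟩
  obtain ⟨a, b, c, hD⟩ := hspan D
  have hNL : ∀ i, B (N i) L = 0 := fun i => (hsymm (N i) L).trans (hLN i)
  have hML : B M L = 0 := (hsymm M L).trans hLM
  have hNM : ∀ i, B (N i) M = -1 := by
    intro i
    have h := congrArg (B (N i)) hM
    rw [map_nsmul, map_sum] at h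
    simp only [hN, Finset.sum_ite_eq', Finset.sum_ite_eq, Finset.mem_univ, if_true, smul_eq_mul, nsmul_eq_mul, Nat.cast_ofNat] at h
    omega
  have hMN : ∀ i, B M (N i) = -1 := fun i => (hsymm M (N i)).trans (hNM i)
  have hMM : B M M = -4 := by
    have h : B (2 • M) M = B (∑ i, N i) M := by rw [hM]
    rw [map_nsmul B 2 M, map_sum] at h
    simp only [LinearMap.smul_apply, LinearMap.coe_sum,
      Finset.sum_apply, hNM, nsmul_eq_mul, Nat.cast_ofNat, Finset.sum_const, Finset.card_univ,
      Fintype.card_fin, smul_eq_mul] at h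
    omega
  subst hD hH
  simp only [map_add, map_sub, map_smul, map_sum, LinearMap.add_apply, LinearMap.sub_apply,
    LinearMap.smul_apply, LinearMap.coe_sum, Finset.sum_apply, smul_eq_mul,
    hL, hLM, hLN, hML, hMM, hMN, hNL, hNM, hN, Finset.mul_sum] at hDD hDH
  simp only [mul_ite, mul_neg, mul_zero, mul_one, Finset.sum_ite_eq, Finset.sum_ite_eq',
    Finset.mem_univ, if_true, zero_add, add_zero, Finset.sum_const_zero, neg_zero] at hDD hDH
  have key1 : ∑ x : Fin 8, c x * (-b + -(c x * 2)) =
      -(b * ∑ x : Fin 8, c x) - 2 * ∑ x : Fin 8, (c x)^2 := by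
    have h1 : ∑ x : Fin 8, c x * (-b + -(c x * 2))
        = ∑ x : Fin 8, (-(b * c x) + -(2 * (c x)^2)) :=
      Finset.sum_congr rfl fun x _ => by ring
    rw [h1, Finset.sum_add_distrib, Finset.sum_neg_distrib, Finset.sum_neg_distrib,
      ← Finset.mul_sum, ← Finset.mul_sum]
    ring
  have key2 : ∑ x : Fin 8, -c x = -∑ x : Fin 8, c x := Finset.sum_neg_distrib c
  rw [key1] at hDD
  rw [key2] at hDD hDH
  set s := ∑ x : Fin 8, c x with hsdef
  set q := ∑ x : Fin 8, (c x)^2 with hqdef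
  have hq : s^2 ≤ 8 * q := cs8 c
  have ha : 0 ≤ a * (a - 1) := by
    rcases le_or_gt a 0 with h | h
    · nlinarith
    · nlinarith
  have hb : 0 ≤ a * (a + 1) := by
    rcases le_or_gt a 0 with h | h
    · rcases le_or_gt a (-1) with h' | h'
      · nlinarith
      · have : a = 0 := by omega
        simp [this]
    · exact mul_nonneg (by omega) (by omega)
  nlinarith [hq, ha, hb, hDD, hDH]
end
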